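/- Let P, Q be finite posets, ξ : P → Q an order homomorphism, and let c_0, ..., c_I ∈ G(ξ) (I ≥ 1) be such that c_{i-1} ≼_0 c_i for each i, where a ≼_0 b means there exist a' ∈ a, b' ∈ b with a' ≤_P b'. Then ξ(c_0) ≤_Q ξ(c_I) (ξ being constant on each class), and if ξ(c_0) = ξ(c_I) then c_0 = c_1 = ... = c_I. -/

import Mathlib

/-- Zigzag connectivity within a subset `A`. -/
def ZigConn {α : Type*} [PartialOrder α] (A : Set α) (x y : α) : Prop :=
  Relation.ReflTransGen (fun a b => a ∈ A ∧ b ∈ A ∧ (a < b ∨ b < a)) x y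

/-- The zigzag-connectivity component of `x` inside the pre-image `ξ⁻¹(ξ(x))`. -/
def Gxi {P Q : Type*} [PartialOrder P] (ξ : P → Q) (x : P) : Set P :=
  {y | ZigConn (ξ ⁻¹' {ξ x}) x y}

lemma xi_eq_of_mem_Gxi {P Q : Type*} [PartialOrder P] (ξ : P → Q) {x y : P}
    (h : y ∈ Gxi ξ x) : ξ y = ξ x := by
  induction h with
  | refl => rfl
  | tail _ hstep _ => exact hstep.2.1

lemma Gxi_eq_of_mem {P Q : Type*} [PartialOrder P] (ξ : P → Q) {x y : P}
    (h : y ∈ Gxi ξ x) : Gxi ξ y = Gxi ξ x := by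
  have hxy : ξ y = ξ x := xi_eq_of_mem_Gxi ξ h
  have hsym : Symmetric (fun a b : P => a ∈ ξ ⁻¹' {ξ x} ∧ b ∈ ξ ⁻¹' {ξ x} ∧ (a < b ∨ b < a)) :=
    fun a b ⟨ha, hb, hab⟩ => ⟨hb, ha, hab.symm⟩
  have hyx : ZigConn (ξ ⁻¹' {ξ x}) y x := (@Relation.ReflTransGen.stdSymm _ _ ⟨fun a b hab => hsym hab⟩).symm _ _ h
  ext z
  simp only [Gxi, Set.mem_setOf_eq, hxy]
  exact ⟨fun hz => Relation.ReflTransGen.trans h hz,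
         fun hz => Relation.ReflTransGen.trans hyx hz⟩

theorem stmt_8 {P Q : Type} [Fintype P] [PartialOrder P] [Fintype Q] [PartialOrder Q]
    (ξ : P → Q) (hmono : Monotone ξ)
    (I : ℕ) (hI : 1 ≤ I) (c : ℕ → Set P)
    (hc : ∀ i ≤ I, ∃ x : P, c i = Gxi ξ x)
    (hprec : ∀ i, 1 ≤ i → i ≤ I → ∃ a ∈ c (i - 1), ∃ b ∈ c i, a ≤ b)
    (x0 xI : P) (hx0 : x0 ∈ c 0) (hxI : xI ∈ c I) :
    ξ x0 ≤ ξ xI ∧ (ξ x0 = ξ xI → ∀ i ≤ I, c i = c 0) := by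
  have hval : ∀ i ≤ I, ∀ a ∈ c i, ∀ b ∈ c i, ξ a = ξ b := by
    intro i hi a ha b hb
    obtain ⟨x, hx⟩ := hc i hi
    rw [hx] at ha hb
    rw [xi_eq_of_mem_Gxi ξ ha, xi_eq_of_mem_Gxi ξ hb]
  have hB : ∀ i j, i ≤ j → j ≤ I → ∀ a ∈ c i, ∀ b ∈ c j, ξ a ≤ ξ b := by
    intro i j
    induction j with
    | zero =>
      intro hij hjI a ha b hb
      have : i = 0 := Nat.le_zero.mp hij
      subst this
      exact (hval 0 hjI a ha b hb).le
    | succ j ih =>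
      intro hij hjI a ha b hb
      rcases Nat.lt_or_ge i (j + 1) with h | h
      · obtain ⟨a', ha', b', hb', hab⟩ := hprec (j + 1) (by omega) hjI
        simp only [Nat.add_sub_cancel] at ha'
        calc ξ a ≤ ξ a' := ih (by omega) (by omega) a ha a' ha'
          _ ≤ ξ b' := hmono hab
          _ = ξ b := hval (j + 1) hjI b' hb' b hb
      · have : i = j + 1 := le_antisymm hij h
        subst this
        exact (hval (j + 1) hjI a ha b hb).le
  refine ⟨hB 0 I (Nat.zero_le I) le_rfl x0 hx0 xI hxI, ?_⟩
  intro heq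
  have hconst : ∀ j ≤ I, ∀ b ∈ c j, ξ b = ξ x0 := by
    intro j hj b hb
    have h1 : ξ x0 ≤ ξ b := hB 0 j (Nat.zero_le j) hj x0 hx0 b hb
    have h2 : ξ b ≤ ξ xI := hB j I hj le_rfl b hb xI hxI
    exact le_antisymm (h2.trans heq.ge) h1
  intro i
  induction i with
  | zero => intro _; rfl
  | succ j ih =>
    intro hjI
    have hcj : c j = c 0 := ih (by omega)
    obtain ⟨a', ha', b', hb', hab⟩ := hprec (j + 1) (by omega) hjI
    simp only [Nat.add_sub_cancel] at ha'
    have hξa : ξ a' = ξ x0 := hconst j (by omega) a' ha'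
    have hξb : ξ b' = ξ x0 := hconst (j + 1) hjI b' hb'
    obtain ⟨xj, hxj⟩ := hc j (by omega)
    obtain ⟨xj1, hxj1⟩ := hc (j + 1) hjI
    have h1 : c j = Gxi ξ a' := by
      rw [hxj]; exact (Gxi_eq_of_mem ξ (hxj ▸ ha' : a' ∈ Gxi ξ xj)).symm
    have h2 : c (j + 1) = Gxi ξ b' := by
      rw [hxj1]; exact (Gxi_eq_of_mem ξ (hxj1 ▸ hb' : b' ∈ Gxi ξ xj1)).symm
    have h3 : Gxi ξ b' = Gxi ξ a' := by
      apply Gxi_eq_of_mem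
      rcases eq_or_lt_of_le hab with h | h
      · subst h; exact Relation.ReflTransGen.refl
      · exact Relation.ReflTransGen.single
          ⟨rfl, by simp [Set.mem_preimage, hξb, hξa], Or.inl h⟩
    rw [h2, h3, ← h1, hcj]
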